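/- Let M ∈ ℂ with M ≠ 0 and y ∈ ℂ, and set P = [[M, 1], [0, M⁻¹]] and Q = [[M, 0], [2−y, M⁻¹]]. Then for every integer m, (QP⁻¹)^m (QP) (Q⁻¹P)^m = I − S_m(y)S_{m−1}(y)·[[2M²−y, M+M⁻¹], [(M+M⁻¹)(2−y), 2M⁻²−y]] + S_m(y)²·[[M²−1, M], [M(2−y), −y+1+M⁻²]] + S_{m−1}(y)²·[[−y+1+M², M⁻¹], [M⁻¹(2−y), M⁻²−1]]. -/

import Mathlib

open Polynomial

/-- Integer-indexed Chebyshev-like polynomials: `S 0 = 1`, `S 1 = X`,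
and `S (l+1) = X * S l - S (l-1)` for all `l : ℤ`
(equivalently `S l = U_l (v/2)` for the Chebyshev polynomials `U` of the second kind). -/
@[semireducible] noncomputable def chebS (R : Type*) [CommRing R] : ℤ → R[X]
  | 0 => 1
  | 1 => X
  | (n : ℕ) + 2 => X * chebS R (n + 1) - chebS R n
  | -((n : ℕ) + 1) => X * chebS R (-n) - chebS R (-n + 1)
  termination_by n => Int.natAbs n + Int.natAbs (n - 1)

section aux

variable (R : Type*) [CommRing R]

lemma chebS_zero' : chebS R 0 = 1 := by rw [chebS.eq_def]

lemma chebS_one' : chebS R 1 = X := by rw [chebS.eq_def]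

lemma chebS_negSucc' (n : ℕ) :
    chebS R (Int.negSucc n) = X * chebS R (-n) - chebS R (-n + 1) := by
  rw [chebS.eq_def]

lemma chebS_two_add' (n : ℕ) :
    chebS R (Int.ofNat (n + 2)) = X * chebS R (n + 1) - chebS R n := by
  rw [chebS.eq_def]

lemma chebS_neg_one' : chebS R (-1 : ℤ) = 0 := by
  rw [show ((-1 : ℤ) = Int.negSucc 0) from rfl, chebS_negSucc' R 0]
  norm_num [chebS_zero', chebS_one']

lemma chebS_rec (m : ℤ) : chebS R (m + 1) = X * chebS R m - chebS R (m - 1) := by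
  rcases m with n | n
  · rcases n with _ | n
    · show chebS R (0 + 1) = X * chebS R 0 - chebS R (0 - 1)
      norm_num [chebS_zero', chebS_one', chebS_neg_one']
    · have h := chebS_two_add' R n
      rw [show (Int.ofNat (n + 1) + 1 : ℤ) = Int.ofNat (n + 2) by
            simp only [Int.ofNat_eq_natCast]; push_cast; ring, h,
        show (Int.ofNat (n + 1) : ℤ) = (n : ℤ) + 1 by
            simp only [Int.ofNat_eq_natCast]; push_cast; ring]
      norm_num
  · have h := chebS_negSucc' R (n + 1)
    rw [show (Int.negSucc (n + 1)) = Int.negSucc n - 1 by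
          simp [Int.negSucc_eq]; ring,
        show ((-(((n : ℕ) + 1 : ℕ) : ℤ)) + 1) = Int.negSucc n + 1 by
          simp [Int.negSucc_eq],
        show (-(((n : ℕ) + 1 : ℕ) : ℤ)) = Int.negSucc n by
          simp [Int.negSucc_eq]] at h
    rw [h]
    ring

/-- Evaluated recurrence. -/
lemma chebS_eval_rec (y : ℂ) (m : ℤ) :
    (chebS ℂ (m + 1)).eval y = y * (chebS ℂ m).eval y - (chebS ℂ (m - 1)).eval y := by
  rw [chebS_rec]; simp

/-- The level-`m` "norm" identity for the Chebyshev-like polynomials, evaluated. -/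
lemma chebS_norm (y : ℂ) (m : ℤ) :
    ((chebS ℂ m).eval y) ^ 2 - y * ((chebS ℂ m).eval y) * ((chebS ℂ (m - 1)).eval y)
      + ((chebS ℂ (m - 1)).eval y) ^ 2 = 1 := by
  induction m using Int.induction_on with
  | zero => norm_num [chebS_zero', chebS_neg_one']
  | succ k ihk =>
      have h := chebS_eval_rec y k
      rw [show ((k : ℤ) + 1 - 1) = (k : ℤ) by ring, h]
      linear_combination ihk
  | pred k ihk =>
      have hr := chebS_eval_rec y (-(k : ℤ) - 1)
      rw [show (-(k : ℤ) - 1 + 1) = -(k : ℤ) by ring] at hr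
      have h' : (chebS ℂ (-(k : ℤ) - 1 - 1)).eval y
          = y * (chebS ℂ (-(k : ℤ) - 1)).eval y - (chebS ℂ (-(k : ℤ))).eval y := by
        linear_combination hr
      rw [h']
      linear_combination ihk

set_option maxHeartbeats 1600000 in
/-- The key one-step conjugation identity (forward direction). -/
lemma step_fwd (M y a b : ℂ) (hM : M ≠ 0) (h : a ^ 2 - y * a * b + b ^ 2 = 1) :
    !![1, -M; (2 - y) * M⁻¹, y - 1]
      * ((1 : Matrix (Fin 2) (Fin 2) ℂ)
          - (a * b) • !![2*M^2 - y, M + M⁻¹; (M + M⁻¹) * (2 - y), 2*M⁻¹^2 - y]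
          + a ^ 2 • !![M^2 - 1, M; M * (2 - y), -y + 1 + M⁻¹^2]
          + b ^ 2 • !![-y + 1 + M^2, M⁻¹; M⁻¹ * (2 - y), M⁻¹^2 - 1])
      * !![1, M⁻¹; (y - 2) * M, y - 1]
    = (1 : Matrix (Fin 2) (Fin 2) ℂ)
        - ((y * a - b) * a) • !![2*M^2 - y, M + M⁻¹; (M + M⁻¹) * (2 - y), 2*M⁻¹^2 - y]
        + (y * a - b) ^ 2 • !![M^2 - 1, M; M * (2 - y), -y + 1 + M⁻¹^2]
        + a ^ 2 • !![-y + 1 + M^2, M⁻¹; M⁻¹ * (2 - y), M⁻¹^2 - 1] := by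
  have h1 : (1 : Matrix (Fin 2) (Fin 2) ℂ)
      = (a ^ 2 - y * a * b + b ^ 2) • (1 : Matrix (Fin 2) (Fin 2) ℂ) := by
    rw [h, one_smul]
  rw [h1, Matrix.one_fin_two]
  ext i j
  fin_cases i <;> fin_cases j <;>
    simp only [Matrix.mul_apply, Fin.sum_univ_two, Matrix.add_apply, Matrix.sub_apply,
      Matrix.smul_apply, Matrix.cons_val', Matrix.cons_val_zero, Matrix.cons_val_one,
      Matrix.head_cons, Matrix.empty_val', Matrix.cons_val_fin_one, Matrix.head_fin_const,
      Matrix.of_apply, smul_eq_mul, Fin.isValue, Fin.zero_eta, Fin.mk_one] <;>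
    field_simp <;> ring

set_option maxHeartbeats 1600000 in
/-- The key one-step conjugation identity (backward direction). -/
lemma step_bwd (M y a b : ℂ) (hM : M ≠ 0) (h : a ^ 2 - y * a * b + b ^ 2 = 1) :
    !![y - 1, M; -((2 - y) * M⁻¹), 1]
      * ((1 : Matrix (Fin 2) (Fin 2) ℂ)
          - (a * b) • !![2*M^2 - y, M + M⁻¹; (M + M⁻¹) * (2 - y), 2*M⁻¹^2 - y]
          + a ^ 2 • !![M^2 - 1, M; M * (2 - y), -y + 1 + M⁻¹^2]
          + b ^ 2 • !![-y + 1 + M^2, M⁻¹; M⁻¹ * (2 - y), M⁻¹^2 - 1])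
      * !![y - 1, -M⁻¹; -((y - 2) * M), 1]
    = (1 : Matrix (Fin 2) (Fin 2) ℂ)
        - (b * (y * b - a)) • !![2*M^2 - y, M + M⁻¹; (M + M⁻¹) * (2 - y), 2*M⁻¹^2 - y]
        + b ^ 2 • !![M^2 - 1, M; M * (2 - y), -y + 1 + M⁻¹^2]
        + (y * b - a) ^ 2 • !![-y + 1 + M^2, M⁻¹; M⁻¹ * (2 - y), M⁻¹^2 - 1] := by
  have h1 : (1 : Matrix (Fin 2) (Fin 2) ℂ)
      = (a ^ 2 - y * a * b + b ^ 2) • (1 : Matrix (Fin 2) (Fin 2) ℂ) := by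
    rw [h, one_smul]
  rw [h1, Matrix.one_fin_two]
  ext i j
  fin_cases i <;> fin_cases j <;>
    simp only [Matrix.mul_apply, Fin.sum_univ_two, Matrix.add_apply, Matrix.sub_apply,
      Matrix.smul_apply, Matrix.cons_val', Matrix.cons_val_zero, Matrix.cons_val_one,
      Matrix.head_cons, Matrix.empty_val', Matrix.cons_val_fin_one, Matrix.head_fin_const,
      Matrix.of_apply, smul_eq_mul, Fin.isValue, Fin.zero_eta, Fin.mk_one] <;>
    field_simp <;> ring

end aux

set_option maxHeartbeats 1600000 in
/-- For `P = [[M,1],[0,M⁻¹]]`, `Q = [[M,0],[2-y,M⁻¹]]` and every integer `m`, the matrix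
`(QP⁻¹)^m (QP) (Q⁻¹P)^m` has the stated closed form in terms of `S_m(y)` and `S_{m-1}(y)`. -/
theorem odd_word_formula (M y : ℂ) (hM : M ≠ 0) (m : ℤ) :
    (!![M, 0; 2 - y, M⁻¹] * (!![M, 1; 0, M⁻¹])⁻¹) ^ m
      * (!![M, 0; 2 - y, M⁻¹] * !![M, 1; 0, M⁻¹])
      * ((!![M, 0; 2 - y, M⁻¹])⁻¹ * !![M, 1; 0, M⁻¹]) ^ m
    = 1 - ((chebS ℂ m).eval y * (chebS ℂ (m - 1)).eval y) •
            !![2*M^2 - y, M + M⁻¹; (M + M⁻¹) * (2 - y), 2*M⁻¹^2 - y]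
        + ((chebS ℂ m).eval y) ^ 2 •
            !![M^2 - 1, M; M * (2 - y), -y + 1 + M⁻¹^2]
        + ((chebS ℂ (m - 1)).eval y) ^ 2 •
            !![-y + 1 + M^2, M⁻¹; M⁻¹ * (2 - y), M⁻¹^2 - 1] := by
  have hPdet : (!![M, 1; 0, M⁻¹]).det = 1 := by
    simp [Matrix.det_fin_two_of]; field_simp
  have hQdet : (!![M, 0; 2 - y, M⁻¹]).det = 1 := by
    simp [Matrix.det_fin_two_of]; field_simp
  have hPinv : (!![M, 1; 0, M⁻¹])⁻¹ = !![M⁻¹, -1; 0, M] := by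
    rw [Matrix.inv_def, hPdet, Matrix.adjugate_fin_two_of]; simp
  have hQinv : (!![M, 0; 2 - y, M⁻¹])⁻¹ = !![M⁻¹, 0; -(2 - y), M] := by
    rw [Matrix.inv_def, hQdet, Matrix.adjugate_fin_two_of]; simp
  have hA : !![M, 0; 2 - y, M⁻¹] * (!![M, 1; 0, M⁻¹])⁻¹
      = !![1, -M; (2 - y) * M⁻¹, y - 1] := by
    rw [hPinv, Matrix.mul_fin_two]
    congr 1 <;> field_simp <;> ring
  have hB : (!![M, 0; 2 - y, M⁻¹])⁻¹ * !![M, 1; 0, M⁻¹]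
      = !![1, M⁻¹; (y - 2) * M, y - 1] := by
    rw [hQinv, Matrix.mul_fin_two]
    congr 1 <;> field_simp <;> ring
  rw [hA, hB]
  have hAdet1 : (!![1, -M; (2 - y) * M⁻¹, y - 1]).det = 1 := by
    simp [Matrix.det_fin_two_of]; field_simp; ring
  have hBdet1 : (!![1, M⁻¹; (y - 2) * M, y - 1]).det = 1 := by
    simp [Matrix.det_fin_two_of]; field_simp; ring
  have hAdet : IsUnit (!![1, -M; (2 - y) * M⁻¹, y - 1]).det := by
    rw [hAdet1]; exact isUnit_one
  have hBdet : IsUnit (!![1, M⁻¹; (y - 2) * M, y - 1]).det := by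
    rw [hBdet1]; exact isUnit_one
  have hAinv : (!![1, -M; (2 - y) * M⁻¹, y - 1])⁻¹
      = !![y - 1, M; -((2 - y) * M⁻¹), 1] := by
    rw [Matrix.inv_def, hAdet1, Matrix.adjugate_fin_two_of]; simp
  have hBinv : (!![1, M⁻¹; (y - 2) * M, y - 1])⁻¹
      = !![y - 1, -M⁻¹; -((y - 2) * M), 1] := by
    rw [Matrix.inv_def, hBdet1, Matrix.adjugate_fin_two_of]; simp
  have hQP : !![M, 0; 2 - y, M⁻¹] * !![M, 1; 0, M⁻¹]
      = 1 - ((chebS ℂ (0 : ℤ)).eval y * (chebS ℂ ((0 : ℤ) - 1)).eval y) •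
            !![2*M^2 - y, M + M⁻¹; (M + M⁻¹) * (2 - y), 2*M⁻¹^2 - y]
        + ((chebS ℂ (0 : ℤ)).eval y) ^ 2 •
            !![M^2 - 1, M; M * (2 - y), -y + 1 + M⁻¹^2]
        + ((chebS ℂ ((0 : ℤ) - 1)).eval y) ^ 2 •
            !![-y + 1 + M^2, M⁻¹; M⁻¹ * (2 - y), M⁻¹^2 - 1] := by
    have h0 : ((chebS ℂ (0 : ℤ)).eval y) = 1 := by rw [chebS_zero']; simp
    have hm1 : ((chebS ℂ ((0 : ℤ) - 1)).eval y) = 0 := by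
      rw [show ((0 : ℤ) - 1) = (-1 : ℤ) by ring, chebS_neg_one']; simp
    rw [h0, hm1, Matrix.one_fin_two, Matrix.mul_fin_two]
    ext i j
    fin_cases i <;> fin_cases j <;>
      simp only [Matrix.add_apply, Matrix.sub_apply, Matrix.smul_apply, Matrix.cons_val',
        Matrix.cons_val_zero, Matrix.cons_val_one, Matrix.head_cons, Matrix.empty_val',
        Matrix.cons_val_fin_one, Matrix.head_fin_const, Matrix.of_apply, smul_eq_mul,
        Fin.isValue, Fin.zero_eta, Fin.mk_one] <;>
      field_simp <;> ring
  induction m using Int.induction_on with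
  | zero => simpa using hQP
  | succ n ih =>
      have hcA : !![1, -M; (2 - y) * M⁻¹, y - 1] ^ (n : ℤ) * !![1, -M; (2 - y) * M⁻¹, y - 1]
          = !![1, -M; (2 - y) * M⁻¹, y - 1] * !![1, -M; (2 - y) * M⁻¹, y - 1] ^ (n : ℤ) := by
        rw [← Matrix.zpow_add_one hAdet, show ((n : ℤ) + 1) = 1 + (n : ℤ) by ring,
          Matrix.zpow_add hAdet, zpow_one]
      rw [Matrix.zpow_add_one hAdet (n : ℤ), Matrix.zpow_add_one hBdet (n : ℤ),
        show !![1, -M; (2 - y) * M⁻¹, y - 1] ^ (n : ℤ) * !![1, -M; (2 - y) * M⁻¹, y - 1]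
              * (!![M, 0; 2 - y, M⁻¹] * !![M, 1; 0, M⁻¹])
              * (!![1, M⁻¹; (y - 2) * M, y - 1] ^ (n : ℤ) * !![1, M⁻¹; (y - 2) * M, y - 1])
            = !![1, -M; (2 - y) * M⁻¹, y - 1]
              * (!![1, -M; (2 - y) * M⁻¹, y - 1] ^ (n : ℤ)
                  * (!![M, 0; 2 - y, M⁻¹] * !![M, 1; 0, M⁻¹])
                  * !![1, M⁻¹; (y - 2) * M, y - 1] ^ (n : ℤ))
              * !![1, M⁻¹; (y - 2) * M, y - 1] by
          rw [hcA]; simp only [mul_assoc],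
        ih, show ((n : ℤ) + 1 - 1) = (n : ℤ) by ring, chebS_eval_rec y n]
      exact step_fwd M y ((chebS ℂ (n : ℤ)).eval y) ((chebS ℂ ((n : ℤ) - 1)).eval y) hM
        (chebS_norm y n)
  | pred n ih =>
      have hr := chebS_eval_rec y (-(n : ℤ) - 1)
      rw [show (-(n : ℤ) - 1 + 1) = -(n : ℤ) by ring] at hr
      have h' : (chebS ℂ (-(n : ℤ) - 1 - 1)).eval y
          = y * (chebS ℂ (-(n : ℤ) - 1)).eval y - (chebS ℂ (-(n : ℤ))).eval y := by
        linear_combination hr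
      have hcA : !![1, -M; (2 - y) * M⁻¹, y - 1] ^ (-(n : ℤ))
            * (!![1, -M; (2 - y) * M⁻¹, y - 1])⁻¹
          = (!![1, -M; (2 - y) * M⁻¹, y - 1])⁻¹
            * !![1, -M; (2 - y) * M⁻¹, y - 1] ^ (-(n : ℤ)) := by
        rw [← Matrix.zpow_neg_one, ← Matrix.zpow_add hAdet, ← Matrix.zpow_add hAdet]
        congr 1; ring
      rw [Matrix.zpow_sub_one hAdet (-(n : ℤ)), Matrix.zpow_sub_one hBdet (-(n : ℤ)),
        show !![1, -M; (2 - y) * M⁻¹, y - 1] ^ (-(n : ℤ)) * (!![1, -M; (2 - y) * M⁻¹, y - 1])⁻¹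
              * (!![M, 0; 2 - y, M⁻¹] * !![M, 1; 0, M⁻¹])
              * (!![1, M⁻¹; (y - 2) * M, y - 1] ^ (-(n : ℤ))
                  * (!![1, M⁻¹; (y - 2) * M, y - 1])⁻¹)
            = (!![1, -M; (2 - y) * M⁻¹, y - 1])⁻¹
              * (!![1, -M; (2 - y) * M⁻¹, y - 1] ^ (-(n : ℤ))
                  * (!![M, 0; 2 - y, M⁻¹] * !![M, 1; 0, M⁻¹])
                  * !![1, M⁻¹; (y - 2) * M, y - 1] ^ (-(n : ℤ)))
              * (!![1, M⁻¹; (y - 2) * M, y - 1])⁻¹ by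
          rw [hcA]; simp only [mul_assoc],
        ih, hAinv, hBinv, h']
      exact step_bwd M y ((chebS ℂ (-(n : ℤ))).eval y) ((chebS ℂ (-(n : ℤ) - 1)).eval y) hM
        (chebS_norm y (-(n : ℤ)))
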